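/- For every n : ℕ, every 0 ≤ k ≤ n, and every real number d: Σ_{l=0}^{n} Σ_{j=0}^{min(l,k)} (n−l choose k−j) · (l choose j) · (n choose l) · (−1)^{j+l} · (d−1)^{j} · (d+1)^{n−j} = (if k = n then (2d)^n else 0). -/

import Mathlib

open Matrix Finset
open scoped BigOperators Kronecker ComplexOrder

noncomputable section

/-- The flip (swap) operator on `ℂ^d ⊗ ℂ^d`. -/
def Flip (d : ℕ) : Matrix (Fin d × Fin d) (Fin d × Fin d) ℂ :=
  Matrix.of fun p q => if p.1 = q.2 ∧ p.2 = q.1 then 1 else 0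

/-- Projection onto the symmetric subspace, `Π_s = (1 + F)/2`. -/
def projSym (d : ℕ) : Matrix (Fin d × Fin d) (Fin d × Fin d) ℂ :=
  (2 : ℂ)⁻¹ • (1 + Flip d)

/-- Projection onto the antisymmetric subspace, `Π_a = (1 - F)/2`. -/
def projAsym (d : ℕ) : Matrix (Fin d × Fin d) (Fin d × Fin d) ℂ :=
  (2 : ℂ)⁻¹ • (1 - Flip d)

/-- The symmetric Werner state `σ_d = (2/(d(d+1))) • Π_s`. -/
def wernerSym (d : ℕ) : Matrix (Fin d × Fin d) (Fin d × Fin d) ℂ :=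
  (2 / ((d : ℂ) * ((d : ℂ) + 1))) • projSym d

/-- The antisymmetric Werner state `α_d = (2/(d(d-1))) • Π_a`. -/
def wernerAsym (d : ℕ) : Matrix (Fin d × Fin d) (Fin d × Fin d) ℂ :=
  (2 / ((d : ℂ) * ((d : ℂ) - 1))) • projAsym d

/-- The POVM element `G_d`: diagonal, with `(i,j),(i,j)` entry `1` iff `i ≠ j`. -/
def Gmat (d : ℕ) : Matrix (Fin d × Fin d) (Fin d × Fin d) ℂ :=
  Matrix.diagonal fun p => if p.1 ≠ p.2 then 1 else 0

/-- `n`-fold tensor power of a matrix on `ℂ^d ⊗ ℂ^d`. -/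
def tpow {d : ℕ} (n : ℕ) (X : Matrix (Fin d × Fin d) (Fin d × Fin d) ℂ) :
    Matrix (Fin n → Fin d × Fin d) (Fin n → Fin d × Fin d) ℂ :=
  Matrix.of fun f g => ∏ m, X (f m) (g m)

/-- The twirled single-copy POVM element `M_d = ((d-1)/(d+1)) • Π_s + Π_a`. -/
def MdMat (d : ℕ) : Matrix (Fin d × Fin d) (Fin d × Fin d) ℂ :=
  (((d : ℂ) - 1) / ((d : ℂ) + 1)) • projSym d + projAsym d

/-- `A_k`: sum over all `k`-element subsets `S` of the copies of the tensor product with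
`Π_a` on copies in `S` and `Π_s` elsewhere. -/
def Amat (d n k : ℕ) : Matrix (Fin n → Fin d × Fin d) (Fin n → Fin d × Fin d) ℂ :=
  ∑ S ∈ Finset.powersetCard k (Finset.univ : Finset (Fin n)),
    Matrix.of fun f g => ∏ m, (if m ∈ S then projAsym d else projSym d) (f m) (g m)

/-- Partial transpose on `ℂ^d ⊗ ℂ^d`. -/
def pt {d : ℕ} (X : Matrix (Fin d × Fin d) (Fin d × Fin d) ℂ) :
    Matrix (Fin d × Fin d) (Fin d × Fin d) ℂ :=
  Matrix.of fun p q => X (p.1, q.2) (q.1, p.2)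

/-- The maximally entangled state `Φ_d`. -/
def Phi (d : ℕ) : Matrix (Fin d × Fin d) (Fin d × Fin d) ℂ :=
  Matrix.of fun p q => if p.1 = p.2 ∧ q.1 = q.2 then ((d : ℂ))⁻¹ else 0

/-- `n`-copy partial transpose. -/
def ptN {d n : ℕ} (Y : Matrix (Fin n → Fin d × Fin d) (Fin n → Fin d × Fin d) ℂ) :
    Matrix (Fin n → Fin d × Fin d) (Fin n → Fin d × Fin d) ℂ :=
  Matrix.of fun f g => Y (fun m => ((f m).1, (g m).2)) (fun m => ((g m).1, (f m).2))

/-- `T_l`: sum over all `l`-element subsets `S` of the copies of the tensor product with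
`Φ_d` on copies in `S` and `1 - Φ_d` elsewhere. -/
def Tmat (d n l : ℕ) : Matrix (Fin n → Fin d × Fin d) (Fin n → Fin d × Fin d) ℂ :=
  ∑ S ∈ Finset.powersetCard l (Finset.univ : Finset (Fin n)),
    Matrix.of fun f g => ∏ m, (if m ∈ S then Phi d else (1 - Phi d)) (f m) (g m)

/-- The matrix `Q` of the linear program: `Q l k = Σ_{j=0}^{min(l,k)}
(n−l choose k−j)(l choose j)(1−d)^j (1+d)^{l−j}`. -/
def Qmat (n : ℕ) (d : ℝ) (l k : ℕ) : ℝ :=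
  ∑ j ∈ Finset.range (min l k + 1),
    ((n - l).choose (k - j) : ℝ) * (l.choose j : ℝ) * (1 - d) ^ j * (1 + d) ^ (l - j)

/-- A PPT POVM element on the `n`-copy space: `E`, `1 - E`, `E^Γ`, `(1-E)^Γ` all PSD. -/
def IsPPTPovmElem {d n : ℕ}
    (E : Matrix (Fin n → Fin d × Fin d) (Fin n → Fin d × Fin d) ℂ) : Prop :=
  E.PosSemidef ∧ (1 - E).PosSemidef ∧ (ptN E).PosSemidef ∧ (ptN (1 - E)).PosSemidef

/-- Error probability for discriminating `σ_d^{⊗n}` (prior `p`) from `α_d^{⊗n}`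
(prior `1-p`) with the two-outcome POVM `{E, 1 - E}`. -/
def errProb (d n : ℕ) (p : ℝ)
    (E : Matrix (Fin n → Fin d × Fin d) (Fin n → Fin d × Fin d) ℂ) : ℝ :=
  ((p : ℂ) * (E * tpow n (wernerSym d)).trace
    + (1 - (p : ℂ)) * ((1 - E) * tpow n (wernerAsym d)).trace).re

/-- Separability of a bipartite matrix. -/
def IsSep {I J : Type*} [Fintype I] [Fintype J]
    (W : Matrix (I × J) (I × J) ℂ) : Prop :=
  ∃ (m : ℕ) (A : Fin m → Matrix I I ℂ) (B : Fin m → Matrix J J ℂ),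
    (∀ i, (A i).PosSemidef) ∧ (∀ i, (B i).PosSemidef) ∧ W = ∑ i, A i ⊗ₖ B i

/-- Trace norm `‖X‖₁ = Tr √(Xᴴ X)`. -/
def traceNorm {ι : Type*} [Fintype ι] [DecidableEq ι] (X : Matrix ι ι ℂ) : ℝ :=
  (((Matrix.posSemidef_conjTranspose_mul_self X).1.eigenvectorUnitary : Matrix ι ι ℂ) *
      Matrix.diagonal ((fun x : ℝ => (x : ℂ)) ∘ (fun x : ℝ => Real.sqrt x) ∘ (Matrix.posSemidef_conjTranspose_mul_self X).1.eigenvalues) *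
      (star (Matrix.posSemidef_conjTranspose_mul_self X).1.eigenvectorUnitary : Matrix ι ι ℂ)).trace.re

/-- Frobenius (Hilbert–Schmidt) norm `‖X‖₂ = √(Tr (Xᴴ X))`. -/
def frobNorm {ι : Type*} [Fintype ι] (X : Matrix ι ι ℂ) : ℝ :=
  Real.sqrt ((Xᴴ * X).trace.re)

lemma key_nat (n j m k : ℕ) (hj : j ≤ k) (hk : k ≤ n) :
    n.choose (j+m) * (j+m).choose j * (n-(j+m)).choose (k-j)
      = n.choose j * (n-j).choose (k-j) * (n-k).choose m := by
  rcases le_or_gt (j+m) n with h | h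
  · have h1 : n.choose (j+m) * (j+m).choose j = n.choose j * (n-j).choose m := by
      have := Nat.choose_mul (n := n) (k := j+m) (s := j) (Nat.le_add_right j m)
      simpa using this
    rw [h1, Nat.mul_assoc, Nat.mul_assoc]
    congr 1
    have hnj : n - (j+m) = n - j - m := by omega
    rw [hnj]
    rcases le_or_gt m (n-k) with hm | hm
    · have e1 := Nat.choose_mul (n := n-j) (k := m+(k-j)) (s := m)
        (Nat.le_add_right m (k-j))
      have e2 := Nat.choose_mul (n := n-j) (k := m+(k-j)) (s := k-j)
        (Nat.le_add_left (k-j) m)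
      have e3 : (m+(k-j)).choose m = (m+(k-j)).choose (k-j) := Nat.choose_symm_add
      have e4 : n - j - m = n - j - m := rfl
      have e5 : m + (k-j) - m = k - j := by omega
      have e6 : m + (k-j) - (k-j) = m := by omega
      have e7 : n - j - (k-j) = n - k := by omega
      rw [e5] at e1; rw [e6, e7] at e2; rw [e3] at e1
      omega
    · have z1 : (n-j-m).choose (k-j) = 0 := Nat.choose_eq_zero_of_lt (by omega)
      have z2 : (n-k).choose m = 0 := Nat.choose_eq_zero_of_lt (by omega)
      rw [z1, z2]; ring
  · have z1 : n.choose (j+m) = 0 := Nat.choose_eq_zero_of_lt h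
    have z2 : (n-k).choose m = 0 := Nat.choose_eq_zero_of_lt (by omega)
    rw [z1, z2]; ring

lemma innerLsum (n k j : ℕ) (hj : j ≤ k) (hk : k ≤ n) :
    ∑ l ∈ Finset.range (n+1),
        ((n-l).choose (k-j) : ℝ) * (l.choose j : ℝ) * (n.choose l : ℝ) * (-1:ℝ)^(j+l)
      = if k = n then (n.choose j : ℝ) else 0 := by
  have step1 : ∑ l ∈ Finset.range (n+1),
        ((n-l).choose (k-j) : ℝ) * (l.choose j : ℝ) * (n.choose l : ℝ) * (-1:ℝ)^(j+l)
      = ∑ l ∈ Finset.Ico j (n+1),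
        ((n-l).choose (k-j) : ℝ) * (l.choose j : ℝ) * (n.choose l : ℝ) * (-1:ℝ)^(j+l) := by
    rw [Finset.range_eq_Ico]
    rw [← Finset.sum_Ico_consecutive _ (Nat.zero_le j) (by omega : j ≤ n+1)]
    have : ∑ l ∈ Finset.Ico 0 j,
        ((n-l).choose (k-j) : ℝ) * (l.choose j : ℝ) * (n.choose l : ℝ) * (-1:ℝ)^(j+l) = 0 := by
      apply Finset.sum_eq_zero
      intro l hl
      simp only [Finset.mem_Ico] at hl
      rw [Nat.choose_eq_zero_of_lt hl.2]
      simp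
    rw [this, zero_add]
  rw [step1, Finset.sum_Ico_eq_sum_range]
  have step2 : ∀ m ∈ Finset.range (n+1-j),
      ((n-(j+m)).choose (k-j) : ℝ) * ((j+m).choose j : ℝ) * (n.choose (j+m) : ℝ) * (-1:ℝ)^(j+(j+m))
      = ((n.choose j : ℝ) * ((n-j).choose (k-j) : ℝ)) * ((-1:ℝ)^m * ((n-k).choose m : ℝ)) := by
    intro m _
    have hkey := key_nat n j m k hj hk
    have hcast : ((n-(j+m)).choose (k-j) : ℝ) * ((j+m).choose j : ℝ) * (n.choose (j+m) : ℝ)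
        = (n.choose j : ℝ) * ((n-j).choose (k-j) : ℝ) * ((n-k).choose m : ℝ) := by
      have := congrArg (Nat.cast (R := ℝ)) hkey
      push_cast at this
      linarith [this]
    have hsign : (-1:ℝ)^(j+(j+m)) = (-1:ℝ)^m := by
      rw [show j+(j+m) = 2*j + m by ring, pow_add, pow_mul]
      simp
    rw [hcast, hsign]; ring
  rw [Finset.sum_congr rfl step2, ← Finset.mul_sum]
  have step3 : ∑ m ∈ Finset.range (n+1-j), (-1:ℝ)^m * ((n-k).choose m : ℝ)
      = if n - k = 0 then 1 else 0 := by
    have hsub : Finset.range (n-k+1) ⊆ Finset.range (n+1-j) := by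
      apply Finset.range_subset_range.2; omega
    rw [← Finset.sum_subset hsub (by
      intro m _ hm
      simp only [Finset.mem_range] at hm
      rw [Nat.choose_eq_zero_of_lt (by omega)]
      simp)]
    have := Int.alternating_sum_range_choose (n := n-k)
    have := congrArg (Int.cast (R := ℝ)) this
    push_cast at this
    simpa using this
  rw [step3]
  rcases eq_or_ne k n with h | h
  · subst h
    simp
  · have : n - k ≠ 0 := by omega
    simp [this, h]

/-- the combinatorial identity behind `s_2(d,n;k) = δ_{nk} ((d−1)/(d+1))^n`. -/
theorem sum_s2 (n k : ℕ) (hk : k ≤ n) (d : ℝ) :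
    ∑ l ∈ Finset.range (n + 1), ∑ j ∈ Finset.range (min l k + 1),
        ((n - l).choose (k - j) : ℝ) * (l.choose j : ℝ) * (n.choose l : ℝ)
          * (-1 : ℝ) ^ (j + l) * (d - 1) ^ j * (d + 1) ^ (n - j)
      = if k = n then (2 * d) ^ n else 0 := by
  have h1 : ∀ l ∈ Finset.range (n+1),
      ∑ j ∈ Finset.range (min l k + 1),
        ((n - l).choose (k - j) : ℝ) * (l.choose j : ℝ) * (n.choose l : ℝ)
          * (-1 : ℝ) ^ (j + l) * (d - 1) ^ j * (d + 1) ^ (n - j)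
      = ∑ j ∈ Finset.range (k + 1),
        ((n - l).choose (k - j) : ℝ) * (l.choose j : ℝ) * (n.choose l : ℝ)
          * (-1 : ℝ) ^ (j + l) * (d - 1) ^ j * (d + 1) ^ (n - j) := by
    intro l _
    apply Finset.sum_subset (Finset.range_subset_range.2 (by omega))
    intro j hj hj'
    simp only [Finset.mem_range] at hj hj'
    have hlj : l < j := by omega
    rw [Nat.choose_eq_zero_of_lt hlj]
    simp
  rw [Finset.sum_congr rfl h1, Finset.sum_comm]
  have h2 : ∀ j ∈ Finset.range (k+1),
      ∑ l ∈ Finset.range (n+1),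
        ((n - l).choose (k - j) : ℝ) * (l.choose j : ℝ) * (n.choose l : ℝ)
          * (-1 : ℝ) ^ (j + l) * (d - 1) ^ j * (d + 1) ^ (n - j)
      = (if k = n then (n.choose j : ℝ) else 0) * ((d - 1) ^ j * (d + 1) ^ (n - j)) := by
    intro j hj
    simp only [Finset.mem_range] at hj
    have hjk : j ≤ k := by omega
    rw [← innerLsum n k j hjk hk, Finset.sum_mul]
    apply Finset.sum_congr rfl
    intro l _
    ring
  rw [Finset.sum_congr rfl h2]
  rcases eq_or_ne k n with h | h
  · subst h
    simp only [if_pos rfl]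
    have := add_pow (d - 1) (d + 1) k
    have h2d : d - 1 + (d + 1) = 2 * d := by ring
    rw [h2d] at this
    rw [this]
    apply Finset.sum_congr rfl
    intro j _
    simp only [if_true]
    ring
  · simp [h]

end
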